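/- arXiv:1609.05800 — 6 statements merged into one kernel-verified Lean document; each statement's English description precedes it below -/
import Mathlib

section
/- Let A be n×n, F be m×m, and g ∈ ℝ^m. Set H = I_m ⊗ A + F ⊗ I_n and G = g ⊗ I_n. Then there exists an invertible mn×mn matrix T such that the block matrix [G, HG, ..., H^{m−1}G] equals [g⊗I_n, (Fg)⊗I_n, ..., (F^{m−1}g)⊗I_n] · T. -/
open Matrix Kronecker

/-- Horizontal concatenation of `m` blocks, each an `mn × n` matrix, into an
`mn × mn` matrix. -/
def blockConcat {m n : ℕ} (X : Fin m → Matrix (Fin m × Fin n) (Unit × Fin n) ℝ) :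
    Matrix (Fin m × Fin n) (Fin m × Fin n) ℝ :=
  Matrix.of fun r c => X c.1 r ((), c.2)

section helpers
open Finset

lemma kron_pow_left {m n : ℕ} (F : Matrix (Fin m) (Fin m) ℝ) (j : ℕ) :
    (F ⊗ₖ (1 : Matrix (Fin n) (Fin n) ℝ)) ^ j = (F ^ j) ⊗ₖ 1 := by
  induction j with
  | zero => simp [Matrix.one_kronecker_one]
  | succ j ih => rw [pow_succ, pow_succ, ih, ← Matrix.mul_kronecker_mul, mul_one]

lemma kron_pow_right {m n : ℕ} (A : Matrix (Fin n) (Fin n) ℝ) (j : ℕ) :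
    ((1 : Matrix (Fin m) (Fin m) ℝ) ⊗ₖ A) ^ j = 1 ⊗ₖ (A ^ j) := by
  induction j with
  | zero => simp [Matrix.one_kronecker_one]
  | succ j ih => rw [pow_succ, pow_succ, ih, ← Matrix.mul_kronecker_mul, mul_one]

lemma H_pow_G {m n : ℕ} (A : Matrix (Fin n) (Fin n) ℝ) (F : Matrix (Fin m) (Fin m) ℝ)
    (g : Fin m → ℝ) (k : ℕ) :
    ((1 : Matrix (Fin m) (Fin m) ℝ) ⊗ₖ A + F ⊗ₖ (1 : Matrix (Fin n) (Fin n) ℝ)) ^ k *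
      ((Matrix.of fun i (_ : Unit) => g i) ⊗ₖ (1 : Matrix (Fin n) (Fin n) ℝ)) =
    ∑ j ∈ range (k + 1), (k.choose j : ℝ) •
      ((Matrix.of fun r (_ : Unit) => (F ^ j).mulVec g r) ⊗ₖ (A ^ (k - j))) := by
  have hc : Commute (F ⊗ₖ (1 : Matrix (Fin n) (Fin n) ℝ))
      ((1 : Matrix (Fin m) (Fin m) ℝ) ⊗ₖ A) := by
    unfold Commute SemiconjBy
    rw [← Matrix.mul_kronecker_mul, ← Matrix.mul_kronecker_mul,
      mul_one, one_mul, mul_one, one_mul]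
  rw [add_comm, hc.add_pow, Matrix.sum_mul]
  refine Finset.sum_congr rfl fun j hj => ?_
  rw [kron_pow_left, kron_pow_right, ← Matrix.mul_kronecker_mul, one_mul, mul_one]
  have h2 : ((F ^ j) ⊗ₖ (A ^ (k - j))) * ((Matrix.of fun i (_ : Unit) => g i) ⊗ₖ (1 : Matrix (Fin n) (Fin n) ℝ))
      = (Matrix.of fun r (_ : Unit) => (F ^ j).mulVec g r) ⊗ₖ (A ^ (k - j)) := by
    rw [← Matrix.mul_kronecker_mul, mul_one]
    congr 1
  rw [← (Nat.cast_commute (k.choose j) ((F ^ j) ⊗ₖ (A ^ (k - j)))).eq, ← nsmul_eq_mul,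
    Matrix.smul_mul, h2, Nat.cast_smul_eq_nsmul ℝ]
end helpers

/-- There is an invertible `mn × mn` matrix `T` with
`[G, HG, …, H^{m-1}G] = [g⊗I_n, (Fg)⊗I_n, …, (F^{m-1}g)⊗I_n] T`, where
`H = I_m ⊗ A + F ⊗ I_n` and `G = g ⊗ I_n`. -/
theorem exists_T_blockConcat (m n : ℕ) (A : Matrix (Fin n) (Fin n) ℝ)
    (F : Matrix (Fin m) (Fin m) ℝ) (g : Fin m → ℝ) :
    ∃ T : Matrix (Fin m × Fin n) (Fin m × Fin n) ℝ, IsUnit T ∧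
      blockConcat (fun k =>
          ((1 : Matrix (Fin m) (Fin m) ℝ) ⊗ₖ A + F ⊗ₖ (1 : Matrix (Fin n) (Fin n) ℝ)) ^ (k : ℕ) *
            ((Matrix.of fun i (_ : Unit) => g i) ⊗ₖ (1 : Matrix (Fin n) (Fin n) ℝ))) =
        blockConcat (fun k =>
          (Matrix.of fun r (_ : Unit) => (F ^ (k : ℕ)).mulVec g r) ⊗ₖ
            (1 : Matrix (Fin n) (Fin n) ℝ)) * T := by
  set T : Matrix (Fin m × Fin n) (Fin m × Fin n) ℝ :=
    Matrix.of fun jp kq =>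
      ((kq.1 : ℕ).choose (jp.1 : ℕ) : ℝ) * (A ^ ((kq.1 : ℕ) - (jp.1 : ℕ))) jp.2 kq.2 with hTdef
  have hT : T.BlockTriangular Prod.fst := by
    intro i j h
    simp only [hTdef, Matrix.of_apply]
    rw [Nat.choose_eq_zero_of_lt (by exact_mod_cast h)]
    simp
  have hblock : ∀ k0 : Fin m, T.toSquareBlock Prod.fst k0 = 1 := by
    intro k0
    ext i j
    have hi := i.2
    have hj := j.2
    simp only [Matrix.toSquareBlock_def, hTdef, Matrix.of_apply, hi, hj,
      Nat.choose_self, Nat.sub_self, pow_zero, Nat.cast_one, one_mul]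
    rw [Matrix.one_apply, Matrix.one_apply]
    congr 1
    rw [eq_iff_iff, Subtype.ext_iff, Prod.ext_iff]
    simp [hi, hj]
  have hunit : IsUnit T := by
    rw [Matrix.isUnit_iff_isUnit_det, hT.det_fintype]
    simp [hblock]
  refine ⟨T, hunit, ?_⟩
  ext r c
  show (((1 : Matrix (Fin m) (Fin m) ℝ) ⊗ₖ A + F ⊗ₖ (1 : Matrix (Fin n) (Fin n) ℝ)) ^ (c.1 : ℕ) *
      ((Matrix.of fun i (_ : Unit) => g i) ⊗ₖ (1 : Matrix (Fin n) (Fin n) ℝ))) r ((), c.2) = _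
  rw [H_pow_G]
  rw [Matrix.sum_apply]
  show _ = ∑ x : Fin m × Fin n,
    blockConcat (fun k => (Matrix.of fun r (_ : Unit) => (F ^ (k : ℕ)).mulVec g r) ⊗ₖ
      (1 : Matrix (Fin n) (Fin n) ℝ)) r x * T x c
  rw [Fintype.sum_prod_type]
  have hrhs : ∀ j : Fin m, ∑ p : Fin n,
      blockConcat (fun k => (Matrix.of fun r (_ : Unit) => (F ^ (k : ℕ)).mulVec g r) ⊗ₖ
        (1 : Matrix (Fin n) (Fin n) ℝ)) r (j, p) * T (j, p) c
      = ((c.1 : ℕ).choose (j : ℕ) : ℝ) *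
        ((F ^ (j : ℕ)).mulVec g r.1 * (A ^ ((c.1 : ℕ) - (j : ℕ))) r.2 c.2) := by
    intro j
    simp only [blockConcat, hTdef, Matrix.of_apply, Matrix.kroneckerMap_apply,
      Matrix.one_apply]
    rw [Finset.sum_eq_single r.2]
    · simp; ring
    · intro p _ hp; simp [Ne.symm hp]
    · simp
  simp only [hrhs]
  rw [Fin.sum_univ_eq_sum_range
    (fun j => ((c.1 : ℕ).choose j : ℝ) *
      ((F ^ j).mulVec g r.1 * (A ^ ((c.1 : ℕ) - j)) r.2 c.2)) m]
  simp only [Matrix.smul_apply, Matrix.kroneckerMap_apply, Matrix.of_apply, smul_eq_mul]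
  refine Finset.sum_subset (Finset.range_subset_range.2 (Nat.succ_le_of_lt c.1.isLt)) ?_
  intro j hj hj2
  have : (c.1 : ℕ) < j := by
    simpa [Nat.lt_succ_iff, not_le] using hj2
  rw [Nat.choose_eq_zero_of_lt this]
  simp
end

section
/- Let N be a strongly connected directed graph on m ≥ 2 vertices, let S be a nonempty proper subset of the arc set, and let q ≤ m be the number of distinct vertices i that are heads of some arc in S. Let N* be the spanning subgraph of N obtained by deleting every arc whose head is a head of some arc in S. Then the underlying undirected graph of N* has at most q connected components, and hence the incidence matrix of N* has rank at least m − q. -/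
/-- Let `N` be a strongly connected directed graph on `m ≥ 2` vertices with
arcs indexed by `ι`, let `S` be a nonempty proper subset of the arcs, `Q` the
set of heads of arcs in `S`, and `q = |Q|`.  Let `N*` be the spanning subgraph
obtained by deleting every arc whose head lies in `Q`, with incidence matrix
`Mstar`.  Then the underlying undirected graph of `N*` has at most `q`
connected components, and `rank Mstar ≥ m - q`. -/
theorem deleted_head_subgraph (m : ℕ) (hm : 2 ≤ m)
    (ι : Type) [Fintype ι] [DecidableEq ι]
    (tail head : ι → Fin m)
    (hsc : ∀ i j : Fin m,
      Relation.ReflTransGen (fun u v => ∃ a : ι, tail a = u ∧ head a = v) i j)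
    (S : Finset ι) (hS : S.Nonempty) (hSproper : S ≠ Finset.univ)
    (Q : Finset (Fin m)) (hQ : Q = S.image head)
    (q : ℕ) (hq : q = Q.card)
    (Mstar : Matrix {a : ι // head a ∉ Q} (Fin m) ℝ)
    (hM : ∀ a : {a : ι // head a ∉ Q},
      Mstar a = (Pi.single (head a.1) 1 - Pi.single (tail a.1) 1 : Fin m → ℝ)) :
    Nat.card (Quot fun i j : Fin m =>
        ∃ a : ι, head a ∉ Q ∧ ((tail a = i ∧ head a = j) ∨ (tail a = j ∧ head a = i))) ≤ q ∧
    m - q ≤ Mstar.rank := by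
  classical
  set r : Fin m → Fin m → Prop := fun i j =>
    ∃ a : ι, head a ∉ Q ∧ ((tail a = i ∧ head a = j) ∨ (tail a = j ∧ head a = i)) with hr
  obtain ⟨a0, ha0⟩ := hS
  have hQne : head a0 ∈ Q := hQ ▸ Finset.mem_image_of_mem head ha0
  have key : ∀ v : Fin m, ∃ x ∈ Q, Quot.mk r x = Quot.mk r v := by
    intro v
    have h := hsc (head a0) v
    induction h with
    | refl => exact ⟨head a0, hQne, rfl⟩
    | tail h1 h2 ih =>
      rename_i b c
      obtain ⟨a, hta, hha⟩ := h2
      by_cases hc : c ∈ Q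
      · exact ⟨c, hc, rfl⟩
      · obtain ⟨x, hx, hxe⟩ := ih
        refine ⟨x, hx, hxe.trans (Quot.sound ?_)⟩
        exact ⟨a, by rw [hha]; exact hc, Or.inl ⟨hta, hha⟩⟩
  haveI : Finite (Quot r) := Finite.of_surjective _ (Quot.exists_rep (r := r))
  haveI : Fintype (Quot r) := Fintype.ofFinite _
  have hsurj : Function.Surjective (fun x : {x // x ∈ Q} => Quot.mk r (x : Fin m)) := by
    intro y
    obtain ⟨v, rfl⟩ := Quot.exists_rep y
    obtain ⟨x, hx, he⟩ := key v
    exact ⟨⟨x, hx⟩, he⟩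
  have comp1 : Nat.card (Quot r) ≤ q := by
    calc Nat.card (Quot r) ≤ Nat.card {x // x ∈ Q} :=
          Nat.card_le_card_of_surjective _ hsurj
      _ = Q.card := by simp [Nat.card_eq_fintype_card]
      _ = q := hq.symm
  refine ⟨comp1, ?_⟩
  -- rank part
  have hker : LinearMap.ker (Matrix.mulVecLin Mstar) ≤
      LinearMap.range (LinearMap.funLeft ℝ ℝ (Quot.mk r)) := by
    intro x hx
    have hx' : ∀ a : {a : ι // head a ∉ Q}, x (head a.1) = x (tail a.1) := by
      intro a
      have h0 : Mstar.mulVec x a = 0 := by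
        have := LinearMap.mem_ker.mp hx
        rw [Matrix.mulVecLin_apply] at this
        exact congrFun this a
      rw [Matrix.mulVec, dotProduct] at h0
      simp only [hM a, Pi.sub_apply, sub_mul, Pi.single_apply] at h0
      rw [Finset.sum_sub_distrib] at h0
      simp only [ite_mul, one_mul, zero_mul, Finset.sum_ite_eq', Finset.mem_univ,
        if_true] at h0
      linarith
    have hresp : ∀ i j, r i j → x i = x j := by
      rintro i j ⟨a, ha, h | h⟩
      · obtain ⟨h1, h2⟩ := h
        have := hx' ⟨a, ha⟩
        rw [h1, h2] at this
        exact this.symm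
      · obtain ⟨h1, h2⟩ := h
        have := hx' ⟨a, ha⟩
        rw [h1, h2] at this
        exact this
    exact ⟨Quot.lift x hresp, rfl⟩
  have hk2 : Module.finrank ℝ (LinearMap.ker (Matrix.mulVecLin Mstar)) ≤ q := by
    calc Module.finrank ℝ (LinearMap.ker (Matrix.mulVecLin Mstar))
        ≤ Module.finrank ℝ (LinearMap.range (LinearMap.funLeft ℝ ℝ (Quot.mk r))) :=
          Submodule.finrank_mono hker
      _ ≤ Module.finrank ℝ (Quot r → ℝ) := (LinearMap.funLeft ℝ ℝ (Quot.mk r)).finrank_range_le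
      _ = Fintype.card (Quot r) := Module.finrank_pi ℝ
      _ = Nat.card (Quot r) := Nat.card_eq_fintype_card.symm
      _ ≤ q := comp1
  have hrn := LinearMap.finrank_range_add_finrank_ker (Matrix.mulVecLin Mstar)
  have hdom : Module.finrank ℝ (Fin m → ℝ) = m := Module.finrank_fin_fun ℝ
  have hrank : Mstar.rank = Module.finrank ℝ (LinearMap.range (Matrix.mulVecLin Mstar)) := rfl
  omega
end

section
/- Let N be a strongly connected directed graph on m vertices with arc set J, and let C ⊂ J be a nonempty proper subset. Let B be the m×|C| matrix whose columns are e_i for each arc (j→i) ∈ C (indexed by heads of arcs in C), and let C̄-matrix be the |J∖C|×m matrix whose rows are c_{ij} = e_i' − e_j' for arcs (j→i) ∉ C. Then rank(C̄-matrix) + rank(B) ≥ m. -/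
open Matrix in
/-- Let `N` be a strongly connected directed graph on `m` vertices with arc
set indexed by `ι`, and `C` a nonempty proper subset of the arcs.  Let `B` be
the `m × |C|` matrix whose column for arc `a ∈ C` is `e_{head a}`, and let
`Cbar` be the matrix whose row for each arc `a ∉ C` is
`e_{head a}' - e_{tail a}'`.  Then `rank Cbar + rank B ≥ m`. -/
theorem rank_incidence_plus_heads (m : ℕ)
    (ι : Type) [Fintype ι] [DecidableEq ι]
    (tail head : ι → Fin m)
    (hsc : ∀ i j : Fin m,
      Relation.ReflTransGen (fun u v => ∃ a : ι, tail a = u ∧ head a = v) i j)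
    (C : Finset ι) (hC : C.Nonempty) (hCproper : C ≠ Finset.univ)
    (B : Matrix (Fin m) {a : ι // a ∈ C} ℝ)
    (hB : ∀ a : {a : ι // a ∈ C}, (fun i => B i a) = (Pi.single (head a.1) 1 : Fin m → ℝ))
    (Cbar : Matrix {a : ι // a ∉ C} (Fin m) ℝ)
    (hCbar : ∀ a : {a : ι // a ∉ C},
      Cbar a = (Pi.single (head a.1) 1 - Pi.single (tail a.1) 1 : Fin m → ℝ)) :
    m ≤ Cbar.rank + B.rank := by
  classical
  set H : Finset (Fin m) := C.image head with hHdef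
  -- linear independence of the single family over H
  have li : LinearIndependent ℝ (fun h : H => (Pi.single (h : Fin m) 1 : Fin m → ℝ)) := by
    have := (Pi.basisFun ℝ (Fin m)).linearIndependent
    have := this.comp (Subtype.val : H → Fin m) Subtype.val_injective
    simpa [Function.comp_def, Pi.basisFun_apply] using this
  -- rank B ≥ H.card
  have hBrank : H.card ≤ B.rank := by
    have hsub : Submodule.span ℝ
        (Set.range fun h : H => (Pi.single (h : Fin m) 1 : Fin m → ℝ)) ≤
        LinearMap.range B.mulVecLin := by
      rw [Submodule.span_le]
      rintro _ ⟨⟨h, hh⟩, rfl⟩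
      obtain ⟨a, ha, rfl⟩ := Finset.mem_image.mp hh
      refine ⟨Pi.single (⟨a, ha⟩ : {a : ι // a ∈ C}) 1, ?_⟩
      rw [Matrix.mulVecLin_apply, Matrix.mulVec_single]
      funext i
      simpa using congrFun (hB ⟨a, ha⟩) i
    calc H.card = Module.finrank ℝ (Submodule.span ℝ
          (Set.range fun h : H => (Pi.single (h : Fin m) 1 : Fin m → ℝ))) := by
          rw [finrank_span_eq_card li, Fintype.card_coe]
      _ ≤ Module.finrank ℝ (LinearMap.range B.mulVecLin) := Submodule.finrank_mono hsub
      _ = B.rank := rfl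
  -- kernel of Cbar
  have key : ∀ x ∈ LinearMap.ker Cbar.mulVecLin, (∀ h ∈ H, x h = 0) → x = 0 := by
    intro x hx hH0
    have step : ∀ a : ι, a ∉ C → x (head a) = x (tail a) := by
      intro a ha
      have h0 := congrFun (LinearMap.mem_ker.mp hx) ⟨a, ha⟩
      rw [Matrix.mulVecLin_apply] at h0
      have h1 : dotProduct (Cbar ⟨a, ha⟩) x = 0 := h0
      rw [hCbar ⟨a, ha⟩, sub_dotProduct, single_dotProduct,
        single_dotProduct] at h1
      simp at h1
      linarith
    obtain ⟨a0, ha0⟩ := hC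
    have base : x (head a0) = 0 := hH0 _ (Finset.mem_image_of_mem head ha0)
    funext v
    show x v = 0
    induction hsc (head a0) v with
    | refl => exact base
    | tail _ hstep ih =>
      obtain ⟨a, hta, hha⟩ := hstep
      by_cases haC : a ∈ C
      · exact hha ▸ hH0 _ (Finset.mem_image_of_mem head haC)
      · rw [← hha, step a haC, hta]; exact ih
  -- rank Cbar ≥ m - H.card
  have hker : Module.finrank ℝ (LinearMap.ker Cbar.mulVecLin) ≤ H.card := by
    have hinj : Function.Injective
        ((LinearMap.funLeft ℝ ℝ (Subtype.val : H → Fin m)).comp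
          (LinearMap.ker Cbar.mulVecLin).subtype) := by
      rw [← LinearMap.ker_eq_bot, LinearMap.ker_eq_bot']
      rintro ⟨x, hx⟩ hx0
      have : ∀ h ∈ H, x h = 0 := by
        intro h hh
        exact congrFun hx0 ⟨h, hh⟩
      exact Subtype.ext (key x hx this)
    have := LinearMap.finrank_le_finrank_of_injective hinj
    simpa [Module.finrank_pi, Fintype.card_coe] using this
  have hrn := LinearMap.finrank_range_add_finrank_ker Cbar.mulVecLin
  rw [Module.finrank_fin_fun] at hrn
  have hCrank : m - H.card ≤ Cbar.rank := by
    have : Cbar.rank = Module.finrank ℝ (LinearMap.range Cbar.mulVecLin) := rfl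
    omega
  omega
end

section
/- Let N be a strongly connected directed graph on m vertices with arc set J, and C ⊂ J nonempty and proper. With B and C̄ as above (B the block of head-indicator columns for arcs in C, C̄ the stack of incidence rows for arcs not in C), for every complex number λ the pencil matrix [[λI_m, B],[C̄, 0]] has rank at least m. -/
open Matrix Module


/-- A vector constant along non-`C` arcs and vanishing at heads of `C` arcs is zero,
by strong connectivity. -/
lemma zero_of_graph (m : ℕ) (ι : Type) (tail head : ι → Fin m)
    (hsc : ∀ i j : Fin m,
      Relation.ReflTransGen (fun u v => ∃ a : ι, tail a = u ∧ head a = v) i j)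
    (C : Finset ι) (hC : C.Nonempty)
    (x : Fin m → ℂ)
    (h1 : ∀ a, a ∉ C → x (head a) = x (tail a))
    (h2 : ∀ a, a ∈ C → x (head a) = 0) : x = 0 := by
  obtain ⟨a0, ha0⟩ := hC
  funext v
  have key : ∀ u v : Fin m,
      Relation.ReflTransGen (fun u v => ∃ a : ι, tail a = u ∧ head a = v) u v →
      x u = 0 → x v = 0 := by
    intro u v h
    induction h with
    | refl => exact id
    | tail _ hstep ih =>
        intro hu
        obtain ⟨a, hta, hha⟩ := hstep
        by_cases hac : a ∈ C
        · rw [← hha]; exact h2 a hac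
        · rw [← hha, h1 a hac, hta]; exact ih hu
  exact key _ v (hsc (head a0) v) (h2 a0 ha0)

/-- With `N` a strongly connected directed graph on `m` vertices, `C` a
nonempty proper subset of the arcs, `B` the matrix of head-indicator columns
`e_{head a}` for arcs `a ∈ C`, and `Cbar` the stack of incidence rows
`e_{head a}' - e_{tail a}'` for arcs `a ∉ C`, the pencil
`[[λI, B], [Cbar, 0]]` has rank at least `m` for every complex `λ`. -/
theorem pencil_rank_ge (m : ℕ)
    (ι : Type) [Fintype ι] [DecidableEq ι]
    (tail head : ι → Fin m)
    (hsc : ∀ i j : Fin m,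
      Relation.ReflTransGen (fun u v => ∃ a : ι, tail a = u ∧ head a = v) i j)
    (C : Finset ι) (hC : C.Nonempty) (hCproper : C ≠ Finset.univ)
    (B : Matrix (Fin m) {a : ι // a ∈ C} ℂ)
    (hB : ∀ a : {a : ι // a ∈ C}, (fun i => B i a) = (Pi.single (head a.1) 1 : Fin m → ℂ))
    (Cbar : Matrix {a : ι // a ∉ C} (Fin m) ℂ)
    (hCbar : ∀ a : {a : ι // a ∉ C},
      Cbar a = (Pi.single (head a.1) 1 - Pi.single (tail a.1) 1 : Fin m → ℂ)) :
    ∀ lam : ℂ,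
      m ≤ (Matrix.fromBlocks (lam • (1 : Matrix (Fin m) (Fin m) ℂ)) B Cbar 0).rank := by
  intro lam
  classical
  set M := Matrix.fromBlocks (lam • (1 : Matrix (Fin m) (Fin m) ℂ)) B Cbar 0 with hM
  -- description of the kernel
  have hker : ∀ z : (Fin m ⊕ {a : ι // a ∈ C}) → ℂ,
      M *ᵥ z = 0 ↔
      (lam • (z ∘ Sum.inl) + B *ᵥ (z ∘ Sum.inr) = 0 ∧ Cbar *ᵥ (z ∘ Sum.inl) = 0) := by
    intro z
    rw [hM, Matrix.fromBlocks_mulVec]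
    rw [Matrix.smul_mulVec, Matrix.one_mulVec, Matrix.zero_mulVec, add_zero]
    constructor
    · intro h
      constructor
      · funext i; exact congrFun h (Sum.inl i)
      · funext a; exact congrFun h (Sum.inr a)
    · intro ⟨h1, h2⟩
      funext s
      cases s with
      | inl i => exact congrFun h1 i
      | inr a => exact congrFun h2 a
  -- Cbar action
  have hCbarVec : ∀ x : Fin m → ℂ, ∀ a : {a : ι // a ∉ C},
      (Cbar *ᵥ x) a = x (head a.1) - x (tail a.1) := by
    intro x a
    show Cbar a ⬝ᵥ x = _
    rw [hCbar a, sub_dotProduct, single_dotProduct,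
      single_dotProduct, one_mul, one_mul]
  -- Bᵀ action
  have hBTVec : ∀ x : Fin m → ℂ, ∀ a : {a : ι // a ∈ C},
      (Bᵀ *ᵥ x) a = x (head a.1) := by
    intro x a
    show Bᵀ a ⬝ᵥ x = _
    have : Bᵀ a = (Pi.single (head a.1) 1 : Fin m → ℂ) := by
      funext i; exact congrFun (hB a) i
    rw [this, single_dotProduct, one_mul]
  -- rank-nullity for M
  have hrn := LinearMap.finrank_range_add_finrank_ker (M.mulVecLin)
  rw [Module.finrank_pi, Fintype.card_sum, Fintype.card_fin, Fintype.card_coe] at hrn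
  have hrank : M.rank = finrank ℂ (LinearMap.range M.mulVecLin) := rfl
  -- suffices: kernel dimension ≤ |C|
  suffices hkd : finrank ℂ (LinearMap.ker M.mulVecLin) ≤ C.card by
    rw [hrank] at *
    omega
  by_cases hlam : lam = 0
  · -- hard case λ = 0
    set U := LinearMap.ker Cbar.mulVecLin with hU
    set V := LinearMap.ker Bᵀ.mulVecLin with hV
    set KB := LinearMap.ker B.mulVecLin with hKB
    -- U ⊓ V = ⊥
    have hUV : U ⊓ V = ⊥ := by
      rw [eq_bot_iff]
      intro x hx
      simp only [Submodule.mem_inf, hU, hV, LinearMap.mem_ker, Matrix.mulVecLin_apply] at hx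
      obtain ⟨hx1, hx2⟩ := hx
      have hx0 : x = 0 := by
        apply zero_of_graph m ι tail head hsc C hC x
        · intro a ha
          have := congrFun hx1 ⟨a, ha⟩
          rw [hCbarVec] at this
          simpa [sub_eq_zero] using this
        · intro a ha
          have := congrFun hx2 ⟨a, ha⟩
          rwa [hBTVec] at this
      simp [hx0]
    have hdimUV : finrank ℂ U + finrank ℂ V ≤ m := by
      have := Submodule.finrank_sup_add_finrank_inf_eq U V
      rw [hUV] at this
      have hle : finrank ℂ (U ⊔ V : Submodule ℂ (Fin m → ℂ)) ≤ m := by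
        have := Submodule.finrank_le (U ⊔ V : Submodule ℂ (Fin m → ℂ))
        rwa [Module.finrank_pi, Fintype.card_fin] at this
      simp only [finrank_bot] at this
      omega
    -- rank-nullity for B and Bᵀ
    have hrnB := LinearMap.finrank_range_add_finrank_ker (B.mulVecLin)
    rw [Module.finrank_pi, Fintype.card_coe] at hrnB
    have hrnBT := LinearMap.finrank_range_add_finrank_ker (Bᵀ.mulVecLin)
    rw [Module.finrank_pi, Fintype.card_fin] at hrnBT
    have hBT : Bᵀ.rank = B.rank := Matrix.rank_transpose B
    have hBrk : B.rank = finrank ℂ (LinearMap.range B.mulVecLin) := rfl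
    have hBTrk : Bᵀ.rank = finrank ℂ (LinearMap.range Bᵀ.mulVecLin) := rfl
    -- injection of ker M into U × KB
    have hmem1 : ∀ z : LinearMap.ker M.mulVecLin,
        ((z : (Fin m ⊕ {a : ι // a ∈ C}) → ℂ) ∘ Sum.inl) ∈ U := by
      intro z
      have hz := z.2
      rw [LinearMap.mem_ker, Matrix.mulVecLin_apply, hker] at hz
      exact hz.2
    have hmem2 : ∀ z : LinearMap.ker M.mulVecLin,
        ((z : (Fin m ⊕ {a : ι // a ∈ C}) → ℂ) ∘ Sum.inr) ∈ KB := by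
      intro z
      have hz := z.2
      rw [LinearMap.mem_ker, Matrix.mulVecLin_apply, hker] at hz
      have := hz.1
      rw [hlam] at this
      simpa [hKB] using this
    let f : LinearMap.ker M.mulVecLin →ₗ[ℂ] (U × KB) :=
      LinearMap.prod
        (LinearMap.codRestrict U
          ((LinearMap.funLeft ℂ ℂ Sum.inl).comp (LinearMap.ker M.mulVecLin).subtype) hmem1)
        (LinearMap.codRestrict KB
          ((LinearMap.funLeft ℂ ℂ Sum.inr).comp (LinearMap.ker M.mulVecLin).subtype) hmem2)
    have hfinj : Function.Injective f := by
      rw [← LinearMap.ker_eq_bot, eq_bot_iff]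
      intro z hz
      simp only [LinearMap.mem_ker] at hz
      have h1 : ((z : (Fin m ⊕ {a : ι // a ∈ C}) → ℂ) ∘ Sum.inl) = 0 := by
        have := congrArg Prod.fst hz
        exact congrArg Subtype.val this
      have h2 : ((z : (Fin m ⊕ {a : ι // a ∈ C}) → ℂ) ∘ Sum.inr) = 0 := by
        have := congrArg Prod.snd hz
        exact congrArg Subtype.val this
      have : (z : (Fin m ⊕ {a : ι // a ∈ C}) → ℂ) = 0 := by
        funext s
        cases s with
        | inl i => exact congrFun h1 i
        | inr a => exact congrFun h2 a
      simpa using Subtype.ext this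
    have hle := LinearMap.finrank_le_finrank_of_injective hfinj
    rw [Module.finrank_prod] at hle
    -- combine
    have e1 : finrank ℂ KB = finrank ℂ (LinearMap.ker B.mulVecLin) := rfl
    have e2 : finrank ℂ V = finrank ℂ (LinearMap.ker Bᵀ.mulVecLin) := rfl
    have e3 : finrank ℂ U = finrank ℂ (LinearMap.ker Cbar.mulVecLin) := rfl
    omega
  · -- easy case λ ≠ 0
    have hmemtriv : ∀ z : LinearMap.ker M.mulVecLin,
        ((z : (Fin m ⊕ {a : ι // a ∈ C}) → ℂ) ∘ Sum.inr) = 0 →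
        (z : (Fin m ⊕ {a : ι // a ∈ C}) → ℂ) = 0 := by
      intro z hzr
      have hz := z.2
      rw [LinearMap.mem_ker, Matrix.mulVecLin_apply, hker] at hz
      have h1 := hz.1
      rw [hzr] at h1
      simp only [Matrix.mulVec_zero, add_zero] at h1
      have hx : (z : (Fin m ⊕ {a : ι // a ∈ C}) → ℂ) ∘ Sum.inl = 0 :=
        (smul_eq_zero.mp h1).resolve_left hlam
      funext s
      cases s with
      | inl i => exact congrFun hx i
      | inr a => exact congrFun hzr a
    let f : LinearMap.ker M.mulVecLin →ₗ[ℂ] ({a : ι // a ∈ C} → ℂ) :=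
      (LinearMap.funLeft ℂ ℂ Sum.inr).comp (LinearMap.ker M.mulVecLin).subtype
    have hfinj : Function.Injective f := by
      rw [← LinearMap.ker_eq_bot, eq_bot_iff]
      intro z hz
      simp only [LinearMap.mem_ker] at hz
      have : (z : (Fin m ⊕ {a : ι // a ∈ C}) → ℂ) = 0 := hmemtriv z hz
      simpa using Subtype.ext this
    have hle := LinearMap.finrank_le_finrank_of_injective hfinj
    rwa [Module.finrank_pi, Fintype.card_coe] at hle
end

section
/- Let F be an m×m matrix and let p ∈ {1,...,m}. If (F, e_p) is a controllable pair, then with H = I_m ⊗ A + F ⊗ I_n for any n×n matrix A, and B_p = e_p ⊗ I_n, the pair (H, B_p) is controllable, i.e., the columns of B_p, HB_p, ..., H^{mn−1}B_p span ℝ^{mn}; moreover already B_p, HB_p, ..., H^{m−1}B_p span ℝ^{mn}. -/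
open Matrix Kronecker

/-- `H = I_m ⊗ A + F ⊗ I_n`. -/
def Hmat (m n : ℕ) (A : Matrix (Fin n) (Fin n) ℝ) (F : Matrix (Fin m) (Fin m) ℝ) :
    Matrix (Fin m × Fin n) (Fin m × Fin n) ℝ :=
  (1 : Matrix (Fin m) (Fin m) ℝ) ⊗ₖ A + F ⊗ₖ (1 : Matrix (Fin n) (Fin n) ℝ)

/-- `B_p = e_p ⊗ I_n`. -/
def Bpmat (m n : ℕ) (p : Fin m) : Matrix (Fin m × Fin n) (Unit × Fin n) ℝ :=
  (Matrix.of fun r (_ : Unit) => if r = p then (1 : ℝ) else 0) ⊗ₖ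
    (1 : Matrix (Fin n) (Fin n) ℝ)

/-- elementary tensor `v ⊗ w`, as a map linear in `w` -/
def tensR {m n : ℕ} (v : Fin m → ℝ) : (Fin n → ℝ) →ₗ[ℝ] (Fin m × Fin n → ℝ) where
  toFun w := fun qj => v qj.1 * w qj.2
  map_add' w1 w2 := by funext qj; simp [mul_add]
  map_smul' c w := by funext qj; simp; ring

/-- elementary tensor `v ⊗ w`, as a map linear in `v` -/
def tensL {m n : ℕ} (w : Fin n → ℝ) : (Fin m → ℝ) →ₗ[ℝ] (Fin m × Fin n → ℝ) where
  toFun v := fun qj => v qj.1 * w qj.2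
  map_add' v1 v2 := by funext qj; simp [add_mul]
  map_smul' c v := by funext qj; simp; ring

lemma kron_one_mulVec {m n : ℕ} (A : Matrix (Fin n) (Fin n) ℝ)
    (v : Fin m → ℝ) (w : Fin n → ℝ) :
    ((1 : Matrix (Fin m) (Fin m) ℝ) ⊗ₖ A).mulVec (fun qj => v qj.1 * w qj.2)
      = fun qj => v qj.1 * A.mulVec w qj.2 := by
  funext ⟨q, j⟩
  simp only [mulVec, dotProduct, kroneckerMap_apply, Fintype.sum_prod_type,
    Matrix.one_apply, ite_mul, one_mul, zero_mul, mul_ite, mul_zero]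
  simp only [Finset.sum_ite_irrel, Finset.sum_const_zero, Finset.sum_ite_eq,
    Finset.mem_univ, if_true, Finset.mul_sum]
  exact Finset.sum_congr rfl fun l _ => by ring

lemma one_kron_mulVec {m n : ℕ} (F : Matrix (Fin m) (Fin m) ℝ)
    (v : Fin m → ℝ) (w : Fin n → ℝ) :
    (F ⊗ₖ (1 : Matrix (Fin n) (Fin n) ℝ)).mulVec (fun qj => v qj.1 * w qj.2)
      = fun qj => F.mulVec v qj.1 * w qj.2 := by
  funext ⟨q, j⟩
  simp only [mulVec, dotProduct, kroneckerMap_apply, Fintype.sum_prod_type,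
    Matrix.one_apply, ite_mul, one_mul, zero_mul, mul_ite, mul_zero]
  simp only [Finset.sum_ite_eq, Finset.mem_univ, if_true]
  rw [Finset.sum_mul]
  exact Finset.sum_congr rfl fun r _ => by ring

lemma Bp_mulVec {m n : ℕ} (p : Fin m) (w : Fin n → ℝ) :
    (((Matrix.of fun r (_ : Unit) => if r = p then (1 : ℝ) else 0) ⊗ₖ
      (1 : Matrix (Fin n) (Fin n) ℝ))).mulVec (fun ul => w ul.2)
      = fun qj => (Pi.single p 1 : Fin m → ℝ) qj.1 * w qj.2 := by
  funext ⟨q, j⟩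
  simp only [mulVec, dotProduct, kroneckerMap_apply, Fintype.sum_prod_type,
    Matrix.one_apply, Matrix.of_apply, ite_mul, one_mul, zero_mul, mul_ite, mul_zero]
  simp [Finset.sum_ite_eq, Pi.single_apply]

lemma Hmat_tens {m n : ℕ} (A : Matrix (Fin n) (Fin n) ℝ) (F : Matrix (Fin m) (Fin m) ℝ)
    (v : Fin m → ℝ) (w : Fin n → ℝ) :
    (Hmat m n A F).mulVecLin (tensR v w) = tensR v (A.mulVec w) + tensR (F.mulVec v) w := by
  show (Hmat m n A F).mulVec _ = _
  rw [Hmat, add_mulVec]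
  show ((1 : Matrix (Fin m) (Fin m) ℝ) ⊗ₖ A).mulVec (fun qj => v qj.1 * w qj.2)
      + (F ⊗ₖ (1 : Matrix (Fin n) (Fin n) ℝ)).mulVec (fun qj => v qj.1 * w qj.2) = _
  rw [kron_one_mulVec, one_kron_mulVec]
  rfl

lemma tens_single {m n : ℕ} (q : Fin m) (j : Fin n) :
    tensL (Pi.single j (1:ℝ)) (Pi.single q (1:ℝ)) = (Pi.single (q, j) 1 : Fin m × Fin n → ℝ) := by
  funext ⟨r, l⟩
  show (Pi.single q (1:ℝ) : Fin m → ℝ) r * (Pi.single j (1:ℝ) : Fin n → ℝ) l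
    = (Pi.single (q, j) 1 : Fin m × Fin n → ℝ) (r, l)
  simp only [Pi.single_apply, Prod.mk.injEq]
  by_cases h1 : r = q <;> by_cases h2 : l = j <;>
    simp [h1, h2, Pi.single_apply, Prod.ext_iff]

/-- If `(F, e_p)` is a controllable pair, then `(H, B_p)` is controllable,
i.e. the columns of `B_p, HB_p, …, H^{mn-1}B_p` span `ℝ^{mn}`; moreover
already `B_p, HB_p, …, H^{m-1}B_p` span `ℝ^{mn}`. -/
theorem controllable_pair_kron (m n : ℕ)
    (A : Matrix (Fin n) (Fin n) ℝ) (F : Matrix (Fin m) (Fin m) ℝ) (p : Fin m)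
    (hctrb : (⨆ k : Fin m,
        (Submodule.span ℝ {(F ^ (k : ℕ)).mulVec (Pi.single p 1)})) = ⊤) :
    (⨆ k : Fin (m * n),
        LinearMap.range (((Hmat m n A F) ^ (k : ℕ)).mulVecLin.comp
          (Bpmat m n p).mulVecLin)) = ⊤ ∧
    (⨆ k : Fin m,
        LinearMap.range (((Hmat m n A F) ^ (k : ℕ)).mulVecLin.comp
          (Bpmat m n p).mulVecLin)) = ⊤ := by
  classical
  by_cases hmn : Nonempty (Fin m × Fin n)
  case neg =>
    have : Subsingleton (Fin m × Fin n → ℝ) :=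
      ⟨fun f g => funext fun x => absurd ⟨x⟩ hmn⟩
    constructor <;> exact Subsingleton.elim _ _
  obtain ⟨q0, j0⟩ := hmn
  have hm : 0 < m := q0.pos
  have hn : 0 < n := j0.pos
  set H := Hmat m n A F with hH
  set S : Submodule ℝ (Fin m × Fin n → ℝ) :=
    ⨆ k : Fin m, LinearMap.range ((H ^ (k : ℕ)).mulVecLin.comp (Bpmat m n p).mulVecLin)
    with hSdef
  -- the Krylov vectors of (F, e_p)
  set vk : ℕ → (Fin m → ℝ) := fun k => (F ^ k).mulVec (Pi.single p 1) with hvk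
  have hvk_succ : ∀ k, vk (k + 1) = F.mulVec (vk k) := by
    intro k
    simp only [hvk, pow_succ']
    rw [← mulVec_mulVec]
  -- auxiliary spaces
  set V : ℕ → Submodule ℝ (Fin m × Fin n → ℝ) :=
    fun k => ⨆ i : Fin k, LinearMap.range (tensR (vk i)) with hV
  have hVle : ∀ k, V k ≤ V (k + 1) := by
    intro k
    apply iSup_le
    intro i
    exact le_iSup_of_le (⟨i.1, by omega⟩ : Fin (k+1)) le_rfl
  -- H maps V k into V (k+1)
  have hHV : ∀ k x, x ∈ V k → H.mulVecLin x ∈ V (k + 1) := by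
    intro k x hx
    have : H.mulVecLin x ∈ Submodule.map H.mulVecLin (V k) := ⟨x, hx, rfl⟩
    revert this
    refine fun h => (?_ : Submodule.map H.mulVecLin (V k) ≤ V (k+1)) h
    rw [hV, Submodule.map_iSup]
    apply iSup_le
    intro i
    rintro _ ⟨_, ⟨w', rfl⟩, rfl⟩
    rw [Hmat_tens]
    refine add_mem ?_ ?_
    · exact Submodule.mem_iSup_of_mem (⟨i.1, by omega⟩ : Fin (k+1)) ⟨A.mulVec w', rfl⟩
    · rw [← hvk_succ]
      exact Submodule.mem_iSup_of_mem (⟨i.1 + 1, by omega⟩ : Fin (k+1)) ⟨w', rfl⟩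
  -- the key expansion lemma
  have hM : ∀ k (w : Fin n → ℝ),
      (H ^ k).mulVecLin (tensR (vk 0) w) - tensR (vk k) w ∈ V k := by
    intro k
    induction k with
    | zero =>
      intro w
      simp [Matrix.mulVecLin_apply]
    | succ k ih =>
      intro w
      have hrw : (H ^ (k+1)).mulVecLin (tensR (vk 0) w)
          = H.mulVecLin ((H ^ k).mulVecLin (tensR (vk 0) w)) := by
        simp only [Matrix.mulVecLin_apply, pow_succ']
        rw [← mulVec_mulVec]
      rw [hrw]
      have hd := ih w
      set d := (H ^ k).mulVecLin (tensR (vk 0) w) - tensR (vk k) w with hddef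
      have hde : (H ^ k).mulVecLin (tensR (vk 0) w) = d + tensR (vk k) w := by
        rw [hddef]; abel
      rw [hde, map_add, Hmat_tens, ← hvk_succ]
      have : H.mulVecLin d + (tensR (vk k) (A.mulVec w) + tensR (vk (k+1)) w)
          - tensR (vk (k+1)) w = H.mulVecLin d + tensR (vk k) (A.mulVec w) := by abel
      rw [this]
      refine add_mem (hHV k d hd) ?_
      exact Submodule.mem_iSup_of_mem (⟨k, by omega⟩ : Fin (k+1)) ⟨A.mulVec w, rfl⟩
  -- B_p u_w = e_p ⊗ w
  have hB : ∀ w : Fin n → ℝ,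
      (Bpmat m n p).mulVecLin (fun ul => w ul.2) = tensR (vk 0) w := by
    intro w
    have : vk 0 = Pi.single p 1 := by
      show (F ^ 0).mulVec _ = _
      rw [pow_zero, one_mulVec]
    rw [this]
    show (Bpmat m n p).mulVec _ = _
    rw [Bpmat, Bp_mulVec]
    rfl
  -- all tensors (F^k e_p) ⊗ w with k < m lie in S
  have hC : ∀ k, k < m → ∀ w : Fin n → ℝ, tensR (vk k) w ∈ S := by
    intro k
    induction k using Nat.strong_induction_on with
    | _ k ih =>
      intro hk w
      have h1 : (H ^ k).mulVecLin (tensR (vk 0) w) ∈ S := by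
        rw [← hB w]
        exact Submodule.mem_iSup_of_mem (⟨k, hk⟩ : Fin m)
          ⟨fun ul => w ul.2, rfl⟩
      have h2 : (H ^ k).mulVecLin (tensR (vk 0) w) - tensR (vk k) w ∈ S := by
        refine (?_ : V k ≤ S) (hM k w)
        apply iSup_le
        intro i
        rintro _ ⟨w', rfl⟩
        exact ih i.1 i.2 (lt_trans i.2 hk) w'
      have := sub_mem h1 h2
      simpa using this
  -- hence S = ⊤
  have hS : S = ⊤ := by
    rw [eq_top_iff]
    rintro x -
    have hx : x = ∑ qj : Fin m × Fin n, x qj • (Pi.single qj 1 : Fin m × Fin n → ℝ) := by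
      ext qj; rw [Finset.sum_apply]
      simp [Pi.single_apply, Finset.sum_ite_eq']
    rw [hx]
    refine Submodule.sum_mem _ fun qj _ => Submodule.smul_mem _ _ ?_
    obtain ⟨q, j⟩ := qj
    rw [← tens_single q j]
    have hq : (Pi.single q (1:ℝ) : Fin m → ℝ) ∈
        (⨆ k : Fin m, (Submodule.span ℝ {(F ^ (k : ℕ)).mulVec (Pi.single p 1)})) := by
      rw [hctrb]; trivial
    have hmap : Submodule.map (tensL (Pi.single j (1:ℝ)))
        (⨆ k : Fin m, (Submodule.span ℝ {(F ^ (k : ℕ)).mulVec (Pi.single p 1)})) ≤ S := by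
      rw [Submodule.map_iSup]
      apply iSup_le
      intro k
      rw [Submodule.map_span, Set.image_singleton]
      rw [Submodule.span_le, Set.singleton_subset_iff]
      have : tensL (Pi.single j (1:ℝ)) ((F ^ (k : ℕ)).mulVec (Pi.single p 1))
          = tensR (vk k.1) (Pi.single j 1) := rfl
      rw [this]
      exact hC k.1 k.2 _
    exact hmap ⟨_, hq, rfl⟩
  refine ⟨?_, hS⟩
  rw [eq_top_iff, ← hS]
  apply iSup_le
  intro k
  have hk : (k : ℕ) < m * n := lt_of_lt_of_le k.2 (Nat.le_mul_of_pos_right m hn)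
  exact le_iSup_of_le (⟨k.1, hk⟩ : Fin (m * n)) le_rfl
end

section
/- Suppose a linear system ẋ = Ax with output y = Cx admits matrices H, K, M, N, V satisfying I = MV + NC and VA = HV + KC. Then for the observer ż = Hz + Ky, x̂ = Mz + Ny, the signal ε = z − Vx satisfies ε̇ = Hε, and the estimation error satisfies x̂ − x = Mε. In particular, if H is a stability matrix (all eigenvalues have negative real part), then x̂(t) − x(t) → 0 as t → ∞ for all initializations. -/
open Matrix NormedSpace Filter

section Aux

lemma aux_pow_exp {b : ℝ} (hb : b < 0) (i : ℕ) :
    Tendsto (fun t : ℝ => t ^ i * Real.exp (b * t)) atTop (nhds 0) := by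
  have h1 : Tendsto (fun t : ℝ => (-b) * t) atTop atTop :=
    Tendsto.const_mul_atTop (by linarith) tendsto_id
  have h2 := (Real.tendsto_pow_mul_exp_neg_atTop_nhds_zero i).comp h1
  have h3 : Tendsto (fun t : ℝ => ((-b) ^ i)⁻¹ * (((-b) * t) ^ i * Real.exp (-((-b) * t))))
      atTop (nhds (((-b) ^ i)⁻¹ * 0)) := h2.const_mul _
  rw [mul_zero] at h3
  refine h3.congr' ?_
  filter_upwards [eventually_ge_atTop (0:ℝ)] with t _
  have hbne : (-b) ^ i ≠ 0 := pow_ne_zero _ (by linarith)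
  field_simp [mul_pow]
  ring_nf

variable {E : Type*} [NormedAddCommGroup E] [NormedSpace ℂ E] [CompleteSpace E]

lemma exp_apply_hasSum (a : E →L[ℂ] E) (w : E) :
    HasSum (fun i : ℕ => ((i.factorial : ℂ))⁻¹ • (a ^ i) w) (exp a w) := by
  have h1 : HasSum (fun i : ℕ => ((i.factorial : ℂ))⁻¹ • a ^ i) (exp a) := by
    rw [exp_eq_tsum ℂ]
    exact (expSeries_summable' (𝕂 := ℂ) a).hasSum
  simpa using h1.mapL (ContinuousLinearMap.apply ℂ E w)

omit [CompleteSpace E] in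
lemma exp_smul_one_complex (c : ℂ) :
    exp (c • (1 : E →L[ℂ] E)) = Complex.exp c • 1 := by
  have halg : c • (1 : E →L[ℂ] E) = algebraMap ℂ (E →L[ℂ] E) c :=
    (Algebra.algebraMap_eq_smul_one c).symm
  rw [halg, ← map_exp_of_mem_ball (algebraMap ℂ (E →L[ℂ] E)) (continuous_algebraMap ℂ _) c
      ((expSeries_radius_eq_top ℂ ℂ).symm ▸ edist_lt_top _ _),
    ← Complex.exp_eq_exp_ℂ, Algebra.algebraMap_eq_smul_one]

lemma exp_apply_gen_eig (a : E →L[ℂ] E) (μ : ℂ) (w : E) (k : ℕ)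
    (hk : ((a - μ • 1) ^ k) w = 0) (t : ℝ) :
    exp (t • a) w = ∑ i ∈ Finset.range k,
      (Complex.exp ((t : ℂ) * μ) * ((t : ℂ) ^ i * ((i.factorial : ℂ))⁻¹)) •
        (((a - μ • 1) ^ i) w) := by
  set N : E →L[ℂ] E := a - μ • 1 with hN
  have hsmul : t • a = ((t : ℂ) * μ) • (1 : E →L[ℂ] E) + (t : ℂ) • N := by
    rw [hN, smul_sub, ← smul_smul]
    have : t • a = (t : ℂ) • a := (algebraMap_smul ℂ t a).symm
    rw [this]; abel
  have hexpeq : exp (t • a) = exp (t • a) := by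
    rfl
  have hcomm : Commute (((t : ℂ) * μ) • (1 : E →L[ℂ] E)) ((t : ℂ) • N) :=
    ((Commute.one_left ((t:ℂ) • N)).smul_left _)
  rw [hexpeq, hsmul, exp_add_of_commute_of_mem_ball (𝕂 := ℂ) hcomm
    ((expSeries_radius_eq_top ℂ (E →L[ℂ] E)).symm ▸ edist_lt_top _ _)
    ((expSeries_radius_eq_top ℂ (E →L[ℂ] E)).symm ▸ edist_lt_top _ _), exp_smul_one_complex]
  have hsum := exp_apply_hasSum ((t : ℂ) • N) w
  have hzero : ∀ i ∉ Finset.range k,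
      ((i.factorial : ℂ))⁻¹ • (((t : ℂ) • N) ^ i) w = 0 := by
    intro i hi
    rw [Finset.mem_range, not_lt] at hi
    have : (N ^ i) w = 0 := by
      obtain ⟨j, rfl⟩ := Nat.exists_eq_add_of_le hi
      rw [add_comm, pow_add]
      simp [ContinuousLinearMap.mul_apply, hk, map_zero]
    rw [smul_pow]
    simp [ContinuousLinearMap.smul_apply, this]
  have : exp ((t : ℂ) • N) w = ∑ i ∈ Finset.range k,
      ((i.factorial : ℂ))⁻¹ • (((t : ℂ) • N) ^ i) w := by
    rw [← hsum.tsum_eq]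
    exact tsum_eq_sum hzero
  rw [ContinuousLinearMap.mul_apply, this, ContinuousLinearMap.smul_apply,
    ContinuousLinearMap.one_apply, Finset.smul_sum]
  refine Finset.sum_congr rfl fun i hi => ?_
  rw [smul_pow, ContinuousLinearMap.smul_apply, smul_smul, smul_smul]
  ring_nf

lemma tendsto_exp_apply_gen_eig (a : E →L[ℂ] E) (μ : ℂ) (hμ : μ.re < 0) (w : E) (k : ℕ)
    (hk : ((a - μ • 1) ^ k) w = 0) :
    Tendsto (fun t : ℝ => exp (t • a) w) atTop (nhds 0) := by
  have heq : ∀ t : ℝ, exp (t • a) w = ∑ i ∈ Finset.range k,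
      (Complex.exp ((t : ℂ) * μ) * ((t : ℂ) ^ i * ((i.factorial : ℂ))⁻¹)) •
        (((a - μ • 1) ^ i) w) := fun t => exp_apply_gen_eig a μ w k hk t
  rw [show (0 : E) = ∑ i ∈ Finset.range k, (0 : E) by simp]
  refine Tendsto.congr (fun t => (heq t).symm) (tendsto_finset_sum _ fun i _ => ?_)
  rw [show (0 : E) = (0 : ℂ) • (((a - μ • 1) ^ i) w) by simp]
  refine Tendsto.smul_const ?_ _
  rw [tendsto_zero_iff_norm_tendsto_zero]
  have hb : Tendsto (fun t : ℝ => (t ^ i * Real.exp (μ.re * t)) * ((i.factorial : ℝ))⁻¹)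
      atTop (nhds (0 * ((i.factorial : ℝ))⁻¹)) :=
    Tendsto.mul_const _ (aux_pow_exp hμ i)
  rw [zero_mul] at hb
  refine squeeze_zero_norm' ?_ hb
  filter_upwards [eventually_ge_atTop (0:ℝ)] with t ht
  have h1 : ‖Complex.exp ((t : ℂ) * μ)‖ = Real.exp (μ.re * t) := by
    rw [Complex.norm_exp]
    congr 1
    simp [mul_comm]
  have h2 : ‖((t:ℂ) ^ i * ((i.factorial : ℂ))⁻¹)‖ = t ^ i * ((i.factorial : ℝ))⁻¹ := by
    rw [norm_mul, norm_pow, norm_inv]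
    congr 2
    · rw [Complex.norm_real, Real.norm_eq_abs, abs_of_nonneg ht]
    · rw [Complex.norm_natCast]
  rw [norm_norm, norm_mul, h1, h2]
  apply le_of_eq; ring

lemma clm_coe_pow_sub (a : E →L[ℂ] E) (μ : ℂ) (k : ℕ) :
    (((a - μ • 1) ^ k : E →L[ℂ] E) : E →ₗ[ℂ] E)
      = ((a : E →ₗ[ℂ] E) - μ • 1) ^ k := by
  induction k with
  | zero => simp
  | succ k ih =>
    rw [pow_succ, pow_succ, ← ih]
    rfl

lemma tendsto_exp_matrix_stable {m : ℕ} (B : Matrix (Fin m) (Fin m) ℂ)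
    (hspec : ∀ μ : ℂ, μ ∈ spectrum ℂ B → μ.re < 0) (w : Fin m → ℂ) :
    Tendsto (fun t : ℝ =>
      exp (t • (Matrix.mulVecLin B).toContinuousLinearMap) w) atTop (nhds 0) := by
  set a : (Fin m → ℂ) →L[ℂ] (Fin m → ℂ) := (Matrix.mulVecLin B).toContinuousLinearMap with ha
  set g : Module.End ℂ (Fin m → ℂ) := Matrix.mulVecLin B with hg
  have hcoe : (a : (Fin m → ℂ) →ₗ[ℂ] (Fin m → ℂ)) = g := LinearMap.coe_toContinuousLinearMap _
  let S : Submodule ℂ (Fin m → ℂ) :=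
  { carrier := {v | Tendsto (fun t : ℝ => exp (t • a) v) atTop (nhds 0)}
    zero_mem' := by simpa using tendsto_const_nhds
    add_mem' := fun {v₁ v₂} h1 h2 => by
      have := h1.add h2
      rw [add_zero] at this
      exact this.congr (fun t => (map_add (exp (t • a)) v₁ v₂).symm)
    smul_mem' := fun c v h => by
      have := h.const_smul c
      rw [smul_zero] at this
      exact this.congr (fun t => (map_smul (exp (t • a)) c v).symm) }
  suffices hS : S = ⊤ by
    have : w ∈ S := hS ▸ Submodule.mem_top
    exact this
  rw [eq_top_iff, ← Module.End.iSup_maxGenEigenspace_eq_top g]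
  refine iSup_le fun μ => fun v hv => ?_
  rw [Module.End.mem_maxGenEigenspace] at hv
  obtain ⟨k, hkv⟩ := hv
  by_cases hv0 : v = 0
  · subst hv0; exact S.zero_mem
  have hk0 : k ≠ 0 := by
    rintro rfl
    simp at hkv
    exact hv0 hkv
  have hgen : g.HasGenEigenvalue μ k := by
    rw [Module.End.hasGenEigenvalue_iff]
    intro hbot
    have hmem : v ∈ g.genEigenspace μ k := by
      rw [Module.End.mem_genEigenspace_nat]
      exact hkv
    rw [hbot] at hmem
    exact hv0 (Submodule.mem_bot ℂ |>.mp hmem)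
  have heig : g.HasEigenvalue μ := Module.End.hasEigenvalue_of_hasGenEigenvalue hgen
  have hμspec : μ ∈ spectrum ℂ B := by
    have h1 : μ ∈ spectrum ℂ g := Module.End.hasEigenvalue_iff_mem_spectrum.mp heig
    have h2 : g = Matrix.toLinAlgEquiv' B := by
      ext v i
      rfl
    rwa [h2, AlgEquiv.spectrum_eq Matrix.toLinAlgEquiv' B] at h1
  have hμ : μ.re < 0 := hspec μ hμspec
  have hka : ((a - μ • 1) ^ k) v = 0 := by
    have : (((a - μ • 1) ^ k : _ →L[ℂ] _) : (Fin m → ℂ) →ₗ[ℂ] (Fin m → ℂ))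
        = (g - μ • 1) ^ k := by
      rw [clm_coe_pow_sub, hcoe]
    calc ((a - μ • 1) ^ k) v
        = (((a - μ • 1) ^ k : _ →L[ℂ] _) : (Fin m → ℂ) →ₗ[ℂ] _) v := rfl
      _ = ((g - μ • 1) ^ k) v := by rw [this]
      _ = 0 := hkv
  exact tendsto_exp_apply_gen_eig a μ hμ v k hka

end Aux

/-- If the observer design equations `I = MV + NC` and `VA = HV + KC` hold,
then for the observer `ż = Hz + Ky`, `x̂ = Mz + Ny` (with `y = Cx`,
`ẋ = Ax`), the signal `ε = z - Vx` satisfies `ε̇ = Hε` and the estimation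
error satisfies `x̂ - x = Mε`.  In particular, if `H` is a stability matrix,
then `x̂(t) - x(t) → 0` as `t → ∞` for all initializations. -/
theorem observer_design_equations (n n1 s : ℕ)
    (A : Matrix (Fin n) (Fin n) ℝ) (C : Matrix (Fin s) (Fin n) ℝ)
    (H : Matrix (Fin n1) (Fin n1) ℝ) (K : Matrix (Fin n1) (Fin s) ℝ)
    (M : Matrix (Fin n) (Fin n1) ℝ) (N : Matrix (Fin n) (Fin s) ℝ)
    (V : Matrix (Fin n1) (Fin n) ℝ)
    (hdes1 : M * V + N * C = 1)
    (hdes2 : V * A = H * V + K * C)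
    (x : ℝ → Fin n → ℝ) (z : ℝ → Fin n1 → ℝ)
    (hx : ∀ t : ℝ, HasDerivAt x (A.mulVec (x t)) t)
    (hz : ∀ t : ℝ, HasDerivAt z (H.mulVec (z t) + K.mulVec (C.mulVec (x t))) t) :
    (∀ t : ℝ, HasDerivAt (fun τ => z τ - V.mulVec (x τ))
        (H.mulVec (z t - V.mulVec (x t))) t) ∧
    (∀ t : ℝ, M.mulVec (z t) + N.mulVec (C.mulVec (x t)) - x t
        = M.mulVec (z t - V.mulVec (x t))) ∧
    ((∀ μ : ℂ, μ ∈ spectrum ℂ (H.map (algebraMap ℝ ℂ)) → μ.re < 0) →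
      Filter.Tendsto (fun t => M.mulVec (z t) + N.mulVec (C.mulVec (x t)) - x t)
        Filter.atTop (nhds 0)) := by
  -- derivative of V x
  have hVx : ∀ t : ℝ, HasDerivAt (fun τ => V.mulVec (x τ)) (V.mulVec (A.mulVec (x t))) t := by
    intro t
    have := ((Matrix.mulVecLin V).toContinuousLinearMap.hasFDerivAt).comp_hasDerivAt t (hx t)
    simpa [Function.comp_def] using this
  -- Part 1
  have part1 : ∀ t : ℝ, HasDerivAt (fun τ => z τ - V.mulVec (x τ))
      (H.mulVec (z t - V.mulVec (x t))) t := by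
    intro t
    have hd := (hz t).sub (hVx t)
    have hid : H.mulVec (z t) + K.mulVec (C.mulVec (x t)) - V.mulVec (A.mulVec (x t))
        = H.mulVec (z t - V.mulVec (x t)) := by
      rw [Matrix.mulVec_sub, Matrix.mulVec_mulVec, Matrix.mulVec_mulVec, Matrix.mulVec_mulVec,
        hdes2, Matrix.add_mulVec]
      abel
    rwa [hid] at hd
  -- Part 2
  have part2 : ∀ t : ℝ, M.mulVec (z t) + N.mulVec (C.mulVec (x t)) - x t
      = M.mulVec (z t - V.mulVec (x t)) := by
    intro t
    have hx1 : x t = (M.mulVec (V.mulVec (x t))) + N.mulVec (C.mulVec (x t)) := by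
      rw [Matrix.mulVec_mulVec, Matrix.mulVec_mulVec, ← Matrix.add_mulVec, hdes1,
        Matrix.one_mulVec]
    calc M.mulVec (z t) + N.mulVec (C.mulVec (x t)) - x t
        = M.mulVec (z t) + N.mulVec (C.mulVec (x t))
          - (M.mulVec (V.mulVec (x t)) + N.mulVec (C.mulVec (x t))) := by rw [← hx1]
      _ = M.mulVec (z t) - M.mulVec (V.mulVec (x t)) := by abel
      _ = M.mulVec (z t - V.mulVec (x t)) := by rw [Matrix.mulVec_sub]
  refine ⟨part1, part2, fun hH => ?_⟩
  -- Part 3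
  set ε : ℝ → Fin n1 → ℝ := fun t => z t - V.mulVec (x t) with hε
  set B : Matrix (Fin n1) (Fin n1) ℂ := H.map (algebraMap ℝ ℂ) with hB
  set fB : (Fin n1 → ℂ) →L[ℂ] (Fin n1 → ℂ) := (Matrix.mulVecLin B).toContinuousLinearMap
    with hfB
  -- the real-to-complex coordinatewise map
  let JL : (Fin n1 → ℝ) →ₗ[ℝ] (Fin n1 → ℂ) :=
  { toFun := fun v i => (v i : ℂ)
    map_add' := fun v w => by funext i; push_cast; simp
    map_smul' := fun c v => by funext i; simp [Complex.real_smul] }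
  let J : (Fin n1 → ℝ) →L[ℝ] (Fin n1 → ℂ) := JL.toContinuousLinearMap
  have hJf : ∀ v : Fin n1 → ℝ, J (H.mulVec v) = fB (J v) := by
    intro v
    funext i
    show ((H.mulVec v) i : ℂ) = (B.mulVec (fun j => (v j : ℂ))) i
    simp only [Matrix.mulVec, dotProduct, hB, Matrix.map_apply]
    push_cast
    rfl
  -- the candidate solution
  set c : ℝ → Fin n1 → ℂ := fun t => exp (t • fB) (J (ε 0)) with hc
  have hcderiv : ∀ t : ℝ, HasDerivAt c (fB (c t)) t := by
    intro t
    have h1 := hasDerivAt_exp_smul_const' (𝕂 := ℝ) fB t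
    have h2 := (((ContinuousLinearMap.apply ℂ (Fin n1 → ℂ)
      (J (ε 0))).restrictScalars ℝ).hasFDerivAt).comp_hasDerivAt t h1
    simpa [hc, ContinuousLinearMap.mul_apply, Function.comp_def] using h2
  have hζderiv : ∀ t : ℝ, HasDerivAt (fun τ => J (ε τ)) (fB (J (ε t))) t := by
    intro t
    have h1 := (J.hasFDerivAt).comp_hasDerivAt t (part1 t)
    rw [← hJf]
    exact h1
  -- uniqueness of ODE solutions
  have huniq : ∀ T : ℝ, 0 ≤ T → J (ε T) = c T := by
    intro T hT
    have := ODE_solution_unique (v := fun _ y => fB y) (K := ‖fB‖₊)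
      (f := fun τ => J (ε τ)) (g := c) (a := 0) (b := T)
      (fun _ => fB.lipschitz)
      (fun t _ => ((hζderiv t).continuousAt).continuousWithinAt)
      (fun t _ => ((hζderiv t).hasDerivWithinAt))
      (fun t _ => ((hcderiv t).continuousAt).continuousWithinAt)
      (fun t _ => ((hcderiv t).hasDerivWithinAt))
      (by
        show J (ε 0) = exp ((0:ℝ) • fB) (J (ε 0))
        rw [show (0:ℝ) • fB = 0 from zero_smul ℝ fB, exp_zero, ContinuousLinearMap.one_apply])
    exact this (Set.right_mem_Icc.mpr hT)
  -- decay of the candidate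
  have hctend : Tendsto c atTop (nhds 0) := tendsto_exp_matrix_stable B hH (J (ε 0))
  have hζtend : Tendsto (fun t => J (ε t)) atTop (nhds 0) := by
    refine hctend.congr' ?_
    filter_upwards [eventually_ge_atTop (0:ℝ)] with t ht
    exact (huniq t ht).symm
  -- decay of ε
  have hεtend : Tendsto ε atTop (nhds 0) := by
    rw [tendsto_pi_nhds]
    intro i
    have h1 : Tendsto (fun t => (J (ε t)) i) atTop (nhds 0) :=
      ((continuous_apply i).tendsto 0).comp hζtend
    have h2 : Tendsto (fun t => ((J (ε t)) i).re) atTop (nhds 0) := by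
      have := (Complex.continuous_re.tendsto 0).comp h1
      simpa [Function.comp_def] using this
    refine h2.congr (fun t => ?_) |>.congr (fun t => rfl)
    rfl
  -- conclude
  have hfinal : Tendsto (fun t => M.mulVec (ε t)) atTop (nhds 0) := by
    have hcont := (Matrix.mulVecLin M).toContinuousLinearMap.continuous.tendsto 0
    have := hcont.comp hεtend
    simpa [Function.comp_def] using this
  refine hfinal.congr (fun t => ?_)
  exact (part2 t).symm
end
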